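/- Let R be a tournament on ℕ, let X ⊆ ℕ be infinite, and let E ⊆ X be finite. Then there exist a partition E = E₀ ∪ E₁ into disjoint sets and an infinite set Y ⊆ X∖E such that E₀ →_R Y and Y →_R E₁, i.e., R(y,x) holds for every y ∈ E₀ and x ∈ Y, and R(x,y) holds for every x ∈ Y and y ∈ E₁. -/

import Mathlib

/-- `R` is a tournament on `ℕ`. -/
def Tournament (R : ℕ → ℕ → Prop) : Prop :=
  (∀ x, ¬ R x x) ∧ ∀ x y, x ≠ y → (R x y ↔ ¬ R y x)

theorem tournament_aux (R : ℕ → ℕ → Prop) (hR : Tournament R)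
    (E : Set ℕ) (hE : E.Finite) :
    ∀ Z : Set ℕ, Z.Infinite →
    ∃ (E₀ E₁ Y : Set ℕ), E₀ ∪ E₁ = E ∧ Disjoint E₀ E₁ ∧
      Y ⊆ Z \ E ∧ Y.Infinite ∧
      (∀ y ∈ E₀, ∀ x ∈ Y, R y x) ∧ (∀ x ∈ Y, ∀ y ∈ E₁, R x y) := by
  refine Set.Finite.induction_on
    (motive := fun E _ => ∀ Z : Set ℕ, Z.Infinite →
      ∃ (E₀ E₁ Y : Set ℕ), E₀ ∪ E₁ = E ∧ Disjoint E₀ E₁ ∧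
        Y ⊆ Z \ E ∧ Y.Infinite ∧
        (∀ y ∈ E₀, ∀ x ∈ Y, R y x) ∧ (∀ x ∈ Y, ∀ y ∈ E₁, R x y))
    E hE ?_ ?_
  · intro Z hZ
    exact ⟨∅, ∅, Z, by simp, by simp, by simp, hZ, by simp, by simp⟩
  · intro a s ha hs ih Z hZ
    obtain ⟨E₀, E₁, Y, hun, hdis, hsub, hinf, h₀, h₁⟩ := ih Z hZ
    have haE₀ : a ∉ E₀ := fun h => ha (hun ▸ Set.mem_union_left _ h)
    have haE₁ : a ∉ E₁ := fun h => ha (hun ▸ Set.mem_union_right _ h)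
    set S : Set ℕ := {x ∈ Y | R a x}
    set T : Set ℕ := {x ∈ Y | R x a}
    have hcov : Y \ {a} ⊆ S ∪ T := by
      rintro x ⟨hxY, hxa⟩
      by_cases h : R a x
      · exact Or.inl ⟨hxY, h⟩
      · exact Or.inr ⟨hxY, ((hR.2 x a (by simpa using hxa)).mpr h)⟩
    have hcovinf : (S ∪ T).Infinite :=
      ((hinf.diff (Set.finite_singleton a)).mono hcov)
    rcases (Set.infinite_union.mp hcovinf) with hS | hT
    · refine ⟨insert a E₀, E₁, S, ?_, ?_, ?_, hS, ?_, ?_⟩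
      · rw [Set.insert_union, hun]
      · rw [Set.insert_eq, Set.disjoint_union_left]
        exact ⟨Set.disjoint_singleton_left.mpr haE₁, hdis⟩
      · rintro x ⟨hxY, hx⟩
        obtain ⟨hxZ, hxs⟩ := hsub hxY
        refine ⟨hxZ, ?_⟩
        simp only [Set.mem_insert_iff, not_or]
        exact ⟨fun h => hR.1 a (h ▸ hx), hxs⟩
      · rintro y hy x ⟨hxY, hx⟩
        rcases hy with rfl | hy
        · exact hx
        · exact h₀ y hy x hxY
      · rintro x ⟨hxY, _⟩ y hy
        exact h₁ x hxY y hy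
    · refine ⟨E₀, insert a E₁, T, ?_, ?_, ?_, hT, ?_, ?_⟩
      · rw [Set.union_insert, hun]
      · rw [Set.insert_eq, Set.disjoint_union_right]
        exact ⟨Set.disjoint_singleton_right.mpr haE₀, hdis⟩
      · rintro x ⟨hxY, hx⟩
        obtain ⟨hxZ, hxs⟩ := hsub hxY
        refine ⟨hxZ, ?_⟩
        simp only [Set.mem_insert_iff, not_or]
        exact ⟨fun h => hR.1 a (h ▸ hx), hxs⟩
      · rintro y hy x ⟨hxY, _⟩
        exact h₀ y hy x hxY
      · rintro x ⟨hxY, hx⟩ y hy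
        rcases hy with rfl | hy
        · exact hx
        · exact h₁ x hxY y hy

/-- Given a tournament `R` on `ℕ`, an infinite set `X` and a finite `E ⊆ X`,
there are a partition `E = E₀ ∪ E₁` and an infinite `Y ⊆ X ∖ E` with
`E₀ →_R Y` and `Y →_R E₁`. -/
theorem tournament_partition_reservoir (R : ℕ → ℕ → Prop) (hR : Tournament R)
    (X : Set ℕ) (hX : X.Infinite) (E : Set ℕ) (hEX : E ⊆ X) (hE : E.Finite) :
    ∃ (E₀ E₁ Y : Set ℕ), E₀ ∪ E₁ = E ∧ Disjoint E₀ E₁ ∧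
      Y ⊆ X \ E ∧ Y.Infinite ∧
      (∀ y ∈ E₀, ∀ x ∈ Y, R y x) ∧ (∀ x ∈ Y, ∀ y ∈ E₁, R x y) :=
  tournament_aux R hR E hE X hX
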